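/- The number of Dyck permutations in S_{2n+1} equals A(n-1,2n) + A(n,2n), where A(m,N) is the number of permutations of [N] with m descents. -/

import Mathlib

open scoped Classical

/-- Number of descents of `w` occurring among the first `ℓ` positions
(0-indexed: position `i` is a descent if `w i > w (i+1)`). -/
noncomputable def descentsIn {N : ℕ} (w : Equiv.Perm (Fin N)) (ℓ : ℕ) : ℕ :=
  ((Finset.range ℓ).filter (fun i =>
    ∃ h : i + 1 < N, w ⟨i + 1, h⟩ < w ⟨i, Nat.lt_of_succ_lt h⟩)).card

/-- Total number of descents of a permutation of `[N]`. -/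
noncomputable def descents {N : ℕ} (w : Equiv.Perm (Fin N)) : ℕ :=
  descentsIn w (N - 1)

/-- The Eulerian number `A(m, N)`: the number of permutations of `[N]`
with exactly `m` descents. -/
noncomputable def eulerian (m N : ℕ) : ℕ :=
  (Finset.univ.filter (fun w : Equiv.Perm (Fin N) => descents w = m)).card


/-- A permutation `w ∈ S_{2n+1}` is a Dyck permutation if its lattice path
ends at `(n,n)` (exactly `n` descents) and every initial segment of its
ascent/descent vector has at least as many ascents as descents. -/
noncomputable def IsDyckPerm (n : ℕ) (w : Equiv.Perm (Fin (2 * n + 1))) : Prop :=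
  descents w = n ∧ ∀ ℓ ≤ 2 * n, descentsIn w ℓ ≤ ℓ - descentsIn w ℓ

namespace DyckProof

open Finset Equiv
open Fin.NatCast Fin.CommRing

/-! ### The cyclic descent word and its partial sums -/

/-- The cyclic descent word of `w`: `+1` for a descent, `-1` for an ascent,
indexed cyclically by naturals. -/
noncomputable def aa (n : ℕ) (w : Equiv.Perm (Fin (2*n+1))) (i : ℕ) : ℤ :=
  if w (((i+1 : ℕ) : Fin (2*n+1))) < w ((i : ℕ) : Fin (2*n+1)) then 1 else -1

/-- Partial sums of the cyclic descent word. -/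
noncomputable def PP (n : ℕ) (w : Equiv.Perm (Fin (2*n+1))) (k : ℕ) : ℤ :=
  ∑ i ∈ Finset.range k, aa n w i

/-- Rotation of a permutation by `j` positions. -/
noncomputable def rho (n : ℕ) (j : ℕ) (w : Equiv.Perm (Fin (2*n+1))) :
    Equiv.Perm (Fin (2*n+1)) :=
  (Equiv.addRight ((j : ℕ) : Fin (2*n+1))).trans w

lemma aa_cases (n : ℕ) (w : Equiv.Perm (Fin (2*n+1))) (i : ℕ) :
    aa n w i = 1 ∨ aa n w i = -1 := by
  unfold aa; split <;> simp

lemma cast_wrap (n : ℕ) : ((2*n+1 : ℕ) : Fin (2*n+1)) = 0 := by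
  ext
  simp only [Fin.val_natCast, Fin.val_zero]
  exact Nat.mod_self _

lemma cast_add_period (n : ℕ) (m : ℕ) :
    ((m + (2*n+1) : ℕ) : Fin (2*n+1)) = (m : Fin (2*n+1)) := by
  rw [Nat.cast_add, cast_wrap, add_zero]

lemma aa_period (n : ℕ) (w : Equiv.Perm (Fin (2*n+1))) (i : ℕ) :
    aa n w (i + (2*n+1)) = aa n w i := by
  unfold aa
  have h1 : i + (2*n+1) + 1 = (i+1) + (2*n+1) := by omega
  rw [h1, cast_add_period, cast_add_period]

lemma PP_succ (n : ℕ) (w : Equiv.Perm (Fin (2*n+1))) (k : ℕ) :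
    PP n w (k+1) = PP n w k + aa n w k := by
  simp [PP, Finset.sum_range_succ]

lemma PP_period (n : ℕ) (w : Equiv.Perm (Fin (2*n+1))) (k : ℕ) :
    PP n w (k + (2*n+1)) = PP n w k + PP n w (2*n+1) := by
  induction k with
  | zero => simp [PP]
  | succ k ih =>
      have : k + 1 + (2*n+1) = (k + (2*n+1)) + 1 := by omega
      rw [this, PP_succ n w (k + (2*n+1)), ih, aa_period, PP_succ n w k]; ring

lemma descentsIn_succ {N : ℕ} (w : Equiv.Perm (Fin N)) (ℓ : ℕ) :
    descentsIn w (ℓ+1) = descentsIn w ℓ +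
      (if (∃ h : ℓ + 1 < N, w ⟨ℓ + 1, h⟩ < w ⟨ℓ, Nat.lt_of_succ_lt h⟩) then 1 else 0) := by
  unfold descentsIn
  rw [Finset.range_add_one, Finset.filter_insert]
  split
  · rw [Finset.card_insert_of_notMem (by simp)]
  · simp

lemma descentsIn_le {N : ℕ} (w : Equiv.Perm (Fin N)) (ℓ : ℕ) :
    descentsIn w ℓ ≤ ℓ := by
  simpa [descentsIn] using (Finset.card_filter_le (Finset.range ℓ) _)

lemma aa_eq_ite (n : ℕ) (w : Equiv.Perm (Fin (2*n+1))) (i : ℕ) (hi : i + 1 < 2*n+1) :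
    aa n w i = if (∃ h : i + 1 < 2*n+1, w ⟨i + 1, h⟩ < w ⟨i, Nat.lt_of_succ_lt h⟩)
      then 1 else -1 := by
  have h1 : ((i+1 : ℕ) : Fin (2*n+1)) = ⟨i+1, hi⟩ := by
    apply Fin.ext; rw [Fin.val_natCast]; exact Nat.mod_eq_of_lt hi
  have h2 : ((i : ℕ) : Fin (2*n+1)) = ⟨i, Nat.lt_of_succ_lt hi⟩ := by
    apply Fin.ext; rw [Fin.val_natCast]; exact Nat.mod_eq_of_lt (Nat.lt_of_succ_lt hi)
  have h3 : (∃ h : i + 1 < 2*n+1, w ⟨i + 1, h⟩ < w ⟨i, Nat.lt_of_succ_lt h⟩)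
      ↔ w ⟨i+1, hi⟩ < w ⟨i, Nat.lt_of_succ_lt hi⟩ :=
    ⟨fun ⟨_, q⟩ => q, fun q => ⟨hi, q⟩⟩
  unfold aa
  rw [h1, h2]
  by_cases hc : w ⟨i+1, hi⟩ < w ⟨i, Nat.lt_of_succ_lt hi⟩
  · rw [if_pos hc, if_pos (h3.2 hc)]
  · rw [if_neg hc, if_neg (fun hx => hc (h3.1 hx))]

lemma PP_eq_descentsIn (n : ℕ) (w : Equiv.Perm (Fin (2*n+1))) :
    ∀ ℓ, ℓ ≤ 2*n → PP n w ℓ = 2 * (descentsIn w ℓ : ℤ) - ℓ := by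
  intro ℓ
  induction ℓ with
  | zero => intro _; simp [PP, descentsIn]
  | succ ℓ ih =>
      intro h
      rw [PP_succ, descentsIn_succ, ih (by omega), aa_eq_ite n w ℓ (by omega)]
      split <;> push_cast <;> ring

lemma descents_eq_descentsIn (n : ℕ) (w : Equiv.Perm (Fin (2*n+1))) :
    descents w = descentsIn w (2*n) := by
  rfl

lemma isDyck_iff (n : ℕ) (w : Equiv.Perm (Fin (2*n+1))) :
    IsDyckPerm n w ↔ ((∀ ℓ, ℓ ≤ 2*n → PP n w ℓ ≤ 0) ∧ PP n w (2*n) = 0) := by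
  constructor
  · rintro ⟨hd, hb⟩
    rw [descents_eq_descentsIn] at hd
    constructor
    · intro ℓ hℓ
      have h1 := hb ℓ hℓ
      have h2 := descentsIn_le w ℓ
      have h3 := PP_eq_descentsIn n w ℓ hℓ
      omega
    · have h3 := PP_eq_descentsIn n w (2*n) le_rfl
      omega
  · rintro ⟨hb, h0⟩
    constructor
    · rw [descents_eq_descentsIn]
      have h3 := PP_eq_descentsIn n w (2*n) le_rfl
      omega
    · intro ℓ hℓ
      have h1 := hb ℓ hℓ
      have h2 := descentsIn_le w ℓ
      have h3 := PP_eq_descentsIn n w ℓ hℓ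
      omega

/-! ### Rotation algebra -/

lemma rho_apply (n : ℕ) (j : ℕ) (w : Equiv.Perm (Fin (2*n+1))) (x : Fin (2*n+1)) :
    rho n j w x = w (x + ((j : ℕ) : Fin (2*n+1))) := rfl

lemma rho_zero (n : ℕ) (w : Equiv.Perm (Fin (2*n+1))) : rho n 0 w = w := by
  ext x
  simp [rho_apply]

lemma rho_rho (n : ℕ) (s t : ℕ) (w : Equiv.Perm (Fin (2*n+1))) :
    rho n s (rho n t w) = rho n (s + t) w := by
  ext x
  simp [rho_apply, add_assoc]

lemma rho_mod (n : ℕ) (j : ℕ) (w : Equiv.Perm (Fin (2*n+1))) :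
    rho n j w = rho n (j % (2*n+1)) w := by
  have hj : j = j % (2*n+1) + (2*n+1) * (j / (2*n+1)) := (Nat.mod_add_div j (2*n+1)).symm
  have e : ((j : ℕ) : Fin (2*n+1)) = ((j % (2*n+1) : ℕ) : Fin (2*n+1)) := by
    conv_lhs => rw [hj]
    rw [Nat.cast_add, Nat.cast_mul, cast_wrap, zero_mul, add_zero]
  ext x
  rw [rho_apply, rho_apply, e]

lemma aa_rho (n : ℕ) (j : ℕ) (w : Equiv.Perm (Fin (2*n+1))) (i : ℕ) :
    aa n (rho n j w) i = aa n w (i + j) := by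
  unfold aa
  have e1 : ((i+1 : ℕ) : Fin (2*n+1)) + ((j : ℕ) : Fin (2*n+1))
      = ((i + j + 1 : ℕ) : Fin (2*n+1)) := by push_cast; ring
  have e2 : ((i : ℕ) : Fin (2*n+1)) + ((j : ℕ) : Fin (2*n+1))
      = ((i + j : ℕ) : Fin (2*n+1)) := by push_cast; ring
  rw [rho_apply, rho_apply, e1, e2]

lemma PP_rho (n : ℕ) (j : ℕ) (w : Equiv.Perm (Fin (2*n+1))) (k : ℕ) :
    PP n (rho n j w) k = PP n w (j + k) - PP n w j := by
  induction k with
  | zero => simp [PP]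
  | succ k ih =>
      have : j + (k+1) = (j + k) + 1 := by omega
      rw [PP_succ, this, PP_succ, ih, aa_rho]
      have : k + j = j + k := by omega
      rw [this]; ring

/-- A "Dyck cut" of the cyclic word at position `j`. -/
def Cut (n : ℕ) (w : Equiv.Perm (Fin (2*n+1))) (j : ℕ) : Prop :=
  (∀ k, 1 ≤ k → k ≤ 2*n → PP n w (j+k) ≤ PP n w j) ∧ PP n w (j + 2*n) = PP n w j

lemma isDyck_rho_iff (n : ℕ) (w : Equiv.Perm (Fin (2*n+1))) (j : ℕ) :
    IsDyckPerm n (rho n j w) ↔ Cut n w j := by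
  rw [isDyck_iff]
  constructor
  · rintro ⟨hb, h0⟩
    constructor
    · intro k hk1 hk2
      have := hb k hk2
      rw [PP_rho] at this
      linarith
    · have := h0
      rw [PP_rho] at this
      linarith
  · rintro ⟨hb, h0⟩
    constructor
    · intro ℓ hℓ
      rw [PP_rho]
      rcases Nat.eq_zero_or_pos ℓ with h | h
      · subst h; simp
      · have := hb ℓ h hℓ
        linarith
    · rw [PP_rho, h0]
      ring

lemma cut_S (n : ℕ) (w : Equiv.Perm (Fin (2*n+1))) (j : ℕ) (h : Cut n w j) :
    PP n w (2*n+1) = aa n w (j + 2*n) := by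
  have h1 := PP_period n w j
  have h2 := PP_succ n w (j + 2*n)
  have h3 : j + 2*n + 1 = j + (2*n+1) := by omega
  rw [h3] at h2
  rw [h2, h.2] at h1
  linarith

lemma cut_unique (n : ℕ) (hn : 1 ≤ n) (w : Equiv.Perm (Fin (2*n+1))) (j1 j2 : ℕ)
    (h1 : Cut n w j1) (h2 : Cut n w j2) (hle : j1 ≤ j2) (hlt : j2 ≤ j1 + 2*n) :
    j1 = j2 := by
  by_cases heq : j1 = j2
  · exact heq
  have hlt1 : j1 < j2 := lt_of_le_of_ne hle heq
  exfalso
  have hS := cut_S n w j1 h1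
  rcases aa_cases n w (j1 + 2*n) with ha | ha <;> rw [ha] at hS
  · -- S = 1
    have hA := h2.1 (j1+2*n+1-j2) (by omega) (by omega)
    rw [show j2 + (j1+2*n+1-j2) = j1 + (2*n+1) from by omega] at hA
    have hB := h1.1 (j2-j1) (by omega) (by omega)
    rw [show j1 + (j2-j1) = j2 from by omega] at hB
    have hP := PP_period n w j1
    rw [hS] at hP
    linarith
  · -- S = -1
    have hC := h2.2
    rw [show j2 + 2*n = (j2-1) + (2*n+1) from by omega, PP_period, hS] at hC
    have hD : PP n w (j2-1) = PP n w j2 + 1 := by linarith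
    rcases eq_or_lt_of_le (show j1 + 1 ≤ j2 from hlt1) with h12 | h12
    · -- j2 = j1 + 1
      have hB := h2.1 (2*n-1) (by omega) (by omega)
      rw [show j2 + (2*n-1) = j1 + 2*n from by omega] at hB
      have hE := h1.2
      rw [show j2 - 1 = j1 from by omega] at hD
      linarith
    · -- j2 ≥ j1 + 2
      have hF := h1.1 (j2-1-j1) (by omega) (by omega)
      rw [show j1 + (j2-1-j1) = j2-1 from by omega] at hF
      rcases eq_or_lt_of_le hlt with h2n | h2n
      · have hE := h1.2
        rw [← h2n] at hE
        linarith
      · have hE := h2.1 (j1+2*n-j2) (by omega) (by omega)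
        rw [show j2 + (j1+2*n-j2) = j1+2*n from by omega] at hE
        have hG := h1.2
        linarith

lemma PP_zero (n : ℕ) (w : Equiv.Perm (Fin (2*n+1))) : PP n w 0 = 0 := by
  simp [PP]

lemma exists_first_argmax (f : ℕ → ℤ) (b : ℕ) :
    ∃ i₀, i₀ ≤ b ∧ (∀ k, k ≤ b → f k ≤ f i₀) ∧ (∀ k, k ≤ b → k < i₀ → f k < f i₀) := by
  induction b with
  | zero =>
      refine ⟨0, le_rfl, ?_, ?_⟩
      · intro k hk
        have : k = 0 := by omega
        rw [this]
      · intro k _ hk2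
        omega
  | succ b ih =>
      obtain ⟨i₀, h1, h2, h3⟩ := ih
      by_cases hc : f i₀ < f (b+1)
      · refine ⟨b+1, le_rfl, ?_, ?_⟩
        · intro k hk
          by_cases hk' : k ≤ b
          · exact (h2 k hk').trans hc.le
          · have : k = b+1 := by omega
            rw [this]
        · intro k hk hk2
          have hk' : k ≤ b := by omega
          exact (h2 k hk').trans_lt hc
      · refine ⟨i₀, by omega, ?_, ?_⟩
        · intro k hk
          by_cases hk' : k ≤ b
          · exact h2 k hk'
          · have : k = b+1 := by omega
            rw [this]
            linarith
        · intro k hk hk2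
          exact h3 k (by omega) hk2

lemma exists_last_argmax (f : ℕ → ℤ) (b : ℕ) :
    ∃ i₀, i₀ ≤ b ∧ (∀ k, k ≤ b → f k ≤ f i₀) ∧ (∀ k, k ≤ b → i₀ < k → f k < f i₀) := by
  induction b with
  | zero =>
      refine ⟨0, le_rfl, ?_, ?_⟩
      · intro k hk
        have : k = 0 := by omega
        rw [this]
      · intro k hk hk2
        omega
  | succ b ih =>
      obtain ⟨i₀, h1, h2, h3⟩ := ih
      by_cases hc : f i₀ ≤ f (b+1)
      · refine ⟨b+1, le_rfl, ?_, ?_⟩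
        · intro k hk
          by_cases hk' : k ≤ b
          · exact (h2 k hk').trans hc
          · have : k = b+1 := by omega
            rw [this]
        · intro k hk hk2
          omega
      · refine ⟨i₀, by omega, ?_, ?_⟩
        · intro k hk
          by_cases hk' : k ≤ b
          · exact h2 k hk'
          · have : k = b+1 := by omega
            rw [this]
            linarith
        · intro k hk hk2
          by_cases hk' : k ≤ b
          · exact h3 k hk' hk2
          · have : k = b+1 := by omega
            rw [this]
            linarith

lemma cut_exists (n : ℕ) (w : Equiv.Perm (Fin (2*n+1)))
    (hS : PP n w (2*n+1) = 1 ∨ PP n w (2*n+1) = -1) :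
    ∃ j, Cut n w j := by
  rcases hS with hS | hS
  · -- S = 1 : first argmax over [1, 2n+1]
    obtain ⟨j, hj1, hj2, hjmax, hstrict⟩ : ∃ j, 1 ≤ j ∧ j ≤ 2*n+1 ∧
        (∀ k, 1 ≤ k → k ≤ 2*n+1 → PP n w k ≤ PP n w j) ∧
        (∀ i, 1 ≤ i → i < j → PP n w i < PP n w j) := by
      obtain ⟨i₁, hi₁b, hmax₁, hfirst₁⟩ := exists_first_argmax (fun i => PP n w (i+1)) (2*n)
      refine ⟨i₁+1, by omega, by omega, ?_, ?_⟩
      · intro k hk1 hk2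
        simpa [show k-1+1 = k from by omega] using hmax₁ (k-1) (by omega)
      · intro i hi1 hi2
        simpa [show i-1+1 = i from by omega] using hfirst₁ (i-1) (by omega) (by omega)
    refine ⟨j, ?_, ?_⟩
    · intro k hk1 hk2
      by_cases hcase : j + k ≤ 2*n+1
      · exact hjmax (j+k) (by omega) hcase
      · rw [show j + k = (j+k-(2*n+1)) + (2*n+1) from by omega, PP_period, hS]
        have := hstrict (j+k-(2*n+1)) (by omega) (by omega)
        linarith
    · have hsplit : PP n w j = PP n w (j-1) + aa n w (j-1) := by
        have := PP_succ n w (j-1)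
        rw [show j - 1 + 1 = j from by omega] at this
        exact this
      have hstep : aa n w (j-1) = 1 := by
        rcases aa_cases n w (j-1) with h | h
        · exact h
        · exfalso
          by_cases hj2' : 2 ≤ j
          · have := hstrict (j-1) (by omega) (by omega)
            rw [h] at hsplit
            linarith
          · have hj1' : j = 1 := by omega
            have h0 : PP n w (j-1) = 0 := by
              rw [hj1']
              exact PP_zero n w
            have hNle := hjmax (2*n+1) (by omega) le_rfl
            rw [hS] at hNle
            linarith
      rw [show j + 2*n = (j-1) + (2*n+1) from by omega, PP_period, hS]
      rw [hstep] at hsplit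
      linarith
  · -- S = -1 : last argmax over [0, 2n], cut at i₀+1
    obtain ⟨i₀, himem, himax, hstrict⟩ := exists_last_argmax (PP n w) (2*n)
    have hstepP : PP n w (i₀+1) = PP n w i₀ + aa n w i₀ := PP_succ n w i₀
    have ha : aa n w i₀ = -1 := by
      rcases aa_cases n w i₀ with h | h
      · exfalso
        by_cases hcase : i₀ + 1 ≤ 2*n
        · have := hstrict (i₀+1) (by omega) (by omega)
          rw [h] at hstepP
          linarith
        · have hi2n : i₀ + 1 = 2*n+1 := by omega
          have h0 : PP n w 0 = 0 := PP_zero n w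
          have hle0 := himax 0 (by omega)
          rw [hi2n, hS, h] at hstepP
          linarith
      · exact h
    refine ⟨i₀ + 1, ?_, ?_⟩
    · intro k hk1 hk2
      rw [hstepP, ha]
      by_cases hcase : i₀ + 1 + k ≤ 2*n
      · have := hstrict (i₀+1+k) (by omega) (by omega)
        linarith
      · rw [show i₀ + 1 + k = (i₀+1+k-(2*n+1)) + (2*n+1) from by omega, PP_period, hS]
        have := himax (i₀+1+k-(2*n+1)) (by omega)
        linarith
    · rw [show i₀ + 1 + 2*n = i₀ + (2*n+1) from by omega, PP_period, hS, hstepP, ha]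

/-! ### The set `C`: permutations with `n` descents and the maximum at an end -/

def InC (n : ℕ) (u : Equiv.Perm (Fin (2*n+1))) : Prop :=
  descents u = n ∧ (u 0 = Fin.last (2*n) ∨ u (Fin.last (2*n)) = Fin.last (2*n))

lemma descents_eq_n_iff (n : ℕ) (u : Equiv.Perm (Fin (2*n+1))) :
    descents u = n ↔ PP n u (2*n+1) = aa n u (2*n) := by
  have h1 := PP_succ n u (2*n)
  have h2 := PP_eq_descentsIn n u (2*n) le_rfl
  rw [descents_eq_descentsIn]
  constructor
  · intro h
    rw [h] at h2
    rw [h1, h2]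
    push_cast
    ring
  · intro h
    rw [h1, h2] at h
    push_cast at h
    have h4 : 2 * ((descentsIn u (2*n) : ℤ)) = 2*n := by linarith
    omega

lemma S_rho (n : ℕ) (j : ℕ) (w : Equiv.Perm (Fin (2*n+1))) :
    PP n (rho n j w) (2*n+1) = PP n w (2*n+1) := by
  rw [PP_rho, PP_period n w j]
  ring_nf

lemma cast_last (n : ℕ) : ((2*n : ℕ) : Fin (2*n+1)) = Fin.last (2*n) := by
  ext
  simp only [Fin.val_natCast, Fin.val_last]
  exact Nat.mod_eq_of_lt (by omega)

lemma aa_front (n : ℕ) (u : Equiv.Perm (Fin (2*n+1))) (h : u 0 = Fin.last (2*n)) :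
    aa n u (2*n) = -1 := by
  unfold aa
  rw [cast_wrap, h, if_neg (not_lt.2 (Fin.le_last _))]

lemma aa_back (n : ℕ) (hn : 1 ≤ n) (u : Equiv.Perm (Fin (2*n+1)))
    (h : u (Fin.last (2*n)) = Fin.last (2*n)) :
    aa n u (2*n) = 1 := by
  unfold aa
  rw [cast_wrap, cast_last, h, if_pos]
  refine Fin.lt_last_iff_ne_last.2 (fun hc => ?_)
  have h0 : (0 : Fin (2*n+1)) = Fin.last (2*n) := u.injective (hc.trans h.symm)
  have := congrArg Fin.val h0
  simp [Fin.val_last] at this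
  omega

/-! ### The bijection from Dyck permutations to `C` -/

/-- The rotation amount sending a Dyck permutation into `C`. -/
noncomputable def Fj (n : ℕ) (w : Equiv.Perm (Fin (2*n+1))) : ℕ :=
  if aa n w (2*n) = 1 then (w.symm (Fin.last (2*n))).val + 1 else (w.symm (Fin.last (2*n))).val

noncomputable def FF (n : ℕ) (w : Equiv.Perm (Fin (2*n+1))) : Equiv.Perm (Fin (2*n+1)) :=
  rho n (Fj n w) w

lemma aa_congr (n : ℕ) (w : Equiv.Perm (Fin (2*n+1))) (i i' : ℕ)
    (h : i % (2*n+1) = i' % (2*n+1)) : aa n w i = aa n w i' := by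
  unfold aa
  have e1 : ((i : ℕ) : Fin (2*n+1)) = ((i' : ℕ) : Fin (2*n+1)) := by
    ext
    simp only [Fin.val_natCast]
    exact h
  have e2 : ((i+1 : ℕ) : Fin (2*n+1)) = ((i'+1 : ℕ) : Fin (2*n+1)) := by
    ext
    simp only [Fin.val_natCast]
    rw [Nat.add_mod i 1, Nat.add_mod i' 1, h]
  rw [e1, e2]

lemma isDyck_S (n : ℕ) (w : Equiv.Perm (Fin (2*n+1))) (hw : IsDyckPerm n w) :
    PP n w (2*n+1) = aa n w (2*n) := by
  have hcut : Cut n w 0 := (isDyck_rho_iff n w 0).1 (by rwa [rho_zero])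
  have := cut_S n w 0 hcut
  rwa [zero_add] at this

lemma FF_mem_C (n : ℕ) (hn : 1 ≤ n) (w : Equiv.Perm (Fin (2*n+1))) (hw : IsDyckPerm n w) :
    InC n (FF n w) := by
  have hS : PP n w (2*n+1) = aa n w (2*n) := isDyck_S n w hw
  set m := (w.symm (Fin.last (2*n))).val with hm
  have hmlt : m < 2*n+1 := (w.symm (Fin.last (2*n))).isLt
  have hwm : w ((m : ℕ) : Fin (2*n+1)) = Fin.last (2*n) := by
    rw [hm, Fin.cast_val_eq_self]
    exact w.apply_symm_apply _
  constructor
  · -- descents (FF n w) = n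
    rw [descents_eq_n_iff]
    have hSr : PP n (FF n w) (2*n+1) = PP n w (2*n+1) := S_rho n (Fj n w) w
    rw [hSr]
    have har : aa n (FF n w) (2*n) = aa n w (2*n + Fj n w) := aa_rho n (Fj n w) w (2*n)
    rw [har]
    unfold Fj
    rcases aa_cases n w (2*n) with ha | ha
    · rw [if_pos ha]
      have hcong : aa n w (2*n + (m + 1)) = aa n w m := by
        apply aa_congr
        rw [show 2*n + (m+1) = m + (2*n+1) from by omega]
        exact Nat.add_mod_right m (2*n+1)
      rw [← hm, hcong, hS, ha]
      -- goal : aa n w m = 1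
      unfold aa
      rw [if_pos]
      rw [hwm]
      refine Fin.lt_last_iff_ne_last.2 (fun hc => ?_)
      have he : ((m+1 : ℕ) : Fin (2*n+1)) = ((m : ℕ) : Fin (2*n+1)) := by
        rw [← hwm] at hc
        exact w.injective hc
      have hev := congrArg Fin.val he
      simp only [Fin.val_natCast] at hev
      rcases Nat.lt_or_ge (m+1) (2*n+1) with hlt | hge
      · rw [Nat.mod_eq_of_lt hlt, Nat.mod_eq_of_lt hmlt] at hev
        omega
      · have : m + 1 = 2*n+1 := by omega
        rw [this, Nat.mod_self, Nat.mod_eq_of_lt hmlt] at hev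
        omega
    · rw [if_neg (by rw [ha]; norm_num)]
      have hend : aa n w (2*n + m) = -1 := by
        unfold aa
        have e1 : ((2*n + m + 1 : ℕ) : Fin (2*n+1)) = ((m : ℕ) : Fin (2*n+1)) := by
          rw [show 2*n + m + 1 = m + (2*n+1) from by omega, cast_add_period]
        rw [e1, hwm, if_neg (not_lt.2 (Fin.le_last _))]
      rw [← hm, hend, hS, ha]
  · -- boundary
    unfold FF
    rcases aa_cases n w (2*n) with ha | ha
    · right
      have hFj : Fj n w = m + 1 := by
        unfold Fj
        rw [if_pos ha, ← hm]
      rw [hFj, rho_apply]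
      conv_lhs => rw [← cast_last n]
      have e : ((2*n : ℕ) : Fin (2*n+1)) + (((m+1 : ℕ)) : Fin (2*n+1))
          = ((m : ℕ) : Fin (2*n+1)) := by
        rw [← Nat.cast_add, show 2*n + (m+1) = m + (2*n+1) from by omega, cast_add_period]
      rw [e, hwm]
    · left
      have hFj : Fj n w = m := by
        unfold Fj
        rw [if_neg (by rw [ha]; norm_num), ← hm]
      rw [hFj, rho_apply, zero_add, hwm]

lemma rho_cancel (n : ℕ) (j : ℕ) (w : Equiv.Perm (Fin (2*n+1))) :
    rho n ((2*n+1 - j % (2*n+1)) % (2*n+1)) (rho n j w) = w := by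
  rw [rho_rho, rho_mod]
  have hmod : ((2*n+1 - j % (2*n+1)) % (2*n+1) + j) % (2*n+1) = 0 := by
    have hd := Nat.mod_add_div j (2*n+1)
    have hr : j % (2*n+1) < 2*n+1 := Nat.mod_lt _ (by omega)
    rcases Nat.eq_zero_or_pos (j % (2*n+1)) with h0 | h0
    · rw [h0, Nat.sub_zero, Nat.mod_self, zero_add]
      exact h0
    · rw [Nat.mod_eq_of_lt (show 2*n+1 - j % (2*n+1) < 2*n+1 from by omega)]
      have he : 2*n+1 - j % (2*n+1) + j = (2*n+1) * (1 + j / (2*n+1)) := by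
        rw [Nat.mul_add, Nat.mul_one]
        omega
      rw [he, Nat.mul_mod_right]
  rw [hmod, rho_zero]

lemma dyck_rho_unique (n : ℕ) (hn : 1 ≤ n) (u : Equiv.Perm (Fin (2*n+1))) (s t : ℕ)
    (hs : s < 2*n+1) (ht : t < 2*n+1)
    (h1 : IsDyckPerm n (rho n s u)) (h2 : IsDyckPerm n (rho n t u)) : s = t := by
  rcases le_total s t with h | h
  · exact cut_unique n hn u s t ((isDyck_rho_iff n u s).1 h1) ((isDyck_rho_iff n u t).1 h2) h
      (by omega)
  · exact (cut_unique n hn u t s ((isDyck_rho_iff n u t).1 h2) ((isDyck_rho_iff n u s).1 h1) h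
      (by omega)).symm

lemma inC_rho_eq (n : ℕ) (hn : 1 ≤ n) (u : Equiv.Perm (Fin (2*n+1))) (t : ℕ)
    (hu : InC n u) (hv : InC n (rho n t u)) : rho n t u = u := by
  obtain ⟨hdu, hbu⟩ := hu
  obtain ⟨hdv, hbv⟩ := hv
  have hSu : PP n u (2*n+1) = aa n u (2*n) := (descents_eq_n_iff n u).1 hdu
  have hSv : PP n (rho n t u) (2*n+1) = aa n (rho n t u) (2*n) := (descents_eq_n_iff n _).1 hdv
  rw [S_rho] at hSv
  rcases hbu with hu0 | hul
  · have hau : aa n u (2*n) = -1 := aa_front n u hu0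
    rcases hbv with hv0 | hvl
    · have hva : rho n t u 0 = u (((t : ℕ) : Fin (2*n+1))) := by
        rw [rho_apply, zero_add]
      have he : ((t : ℕ) : Fin (2*n+1)) = 0 := u.injective (by rw [← hva, hv0, hu0])
      ext x
      rw [rho_apply, he, add_zero]
    · exfalso
      have hav : aa n (rho n t u) (2*n) = 1 := aa_back n hn _ hvl
      rw [hav, hSu, hau] at hSv
      norm_num at hSv
  · have hau : aa n u (2*n) = 1 := aa_back n hn u hul
    rcases hbv with hv0 | hvl
    · exfalso
      have hav : aa n (rho n t u) (2*n) = -1 := aa_front n _ hv0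
      rw [hav, hSu, hau] at hSv
      norm_num at hSv
    · have hva : rho n t u (Fin.last (2*n)) = u (Fin.last (2*n) + ((t : ℕ) : Fin (2*n+1))) :=
        rho_apply n t u _
      have he : Fin.last (2*n) + ((t : ℕ) : Fin (2*n+1)) = Fin.last (2*n) :=
        u.injective (by rw [← hva, hvl, hul])
      have he2 : ((t : ℕ) : Fin (2*n+1)) = 0 := by
        have := add_eq_left.1 he
        exact this
      ext x
      rw [rho_apply, he2, add_zero]

lemma FF_inj (n : ℕ) (hn : 1 ≤ n) (w1 w2 : Equiv.Perm (Fin (2*n+1)))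
    (h1 : IsDyckPerm n w1) (h2 : IsDyckPerm n w2) (h : FF n w1 = FF n w2) : w1 = w2 := by
  set s1 := (2*n+1 - (Fj n w1) % (2*n+1)) % (2*n+1) with hs1
  set s2 := (2*n+1 - (Fj n w2) % (2*n+1)) % (2*n+1) with hs2
  have e1 : rho n s1 (FF n w1) = w1 := rho_cancel n (Fj n w1) w1
  have e2 : rho n s2 (FF n w1) = w2 := by
    rw [h]
    exact rho_cancel n (Fj n w2) w2
  have hlt1 : s1 < 2*n+1 := Nat.mod_lt _ (by omega)
  have hlt2 : s2 < 2*n+1 := Nat.mod_lt _ (by omega)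
  have hd1 : IsDyckPerm n (rho n s1 (FF n w1)) := by rwa [e1]
  have hd2 : IsDyckPerm n (rho n s2 (FF n w1)) := by rwa [e2]
  have : s1 = s2 := dyck_rho_unique n hn (FF n w1) s1 s2 hlt1 hlt2 hd1 hd2
  rw [← e1, ← e2, this]

lemma FF_surj (n : ℕ) (hn : 1 ≤ n) (u : Equiv.Perm (Fin (2*n+1))) (hu : InC n u) :
    ∃ w, IsDyckPerm n w ∧ FF n w = u := by
  have hS : PP n u (2*n+1) = aa n u (2*n) := (descents_eq_n_iff n u).1 hu.1
  have hS' : PP n u (2*n+1) = 1 ∨ PP n u (2*n+1) = -1 := by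
    rcases aa_cases n u (2*n) with h | h
    · left
      rw [hS, h]
    · right
      rw [hS, h]
  obtain ⟨j, hj⟩ := cut_exists n u hS'
  have hdyck : IsDyckPerm n (rho n j u) := (isDyck_rho_iff n u j).2 hj
  refine ⟨rho n j u, hdyck, ?_⟩
  have hC : InC n (FF n (rho n j u)) := FF_mem_C n hn _ hdyck
  have he : FF n (rho n j u) = rho n (Fj n (rho n j u) + j) u :=
    rho_rho n (Fj n (rho n j u)) j u
  rw [he] at hC ⊢
  exact inC_rho_eq n hn u _ hu hC

lemma card_B_eq_card_C (n : ℕ) (hn : 1 ≤ n) :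
    (Finset.univ.filter (fun w : Equiv.Perm (Fin (2 * n + 1)) => IsDyckPerm n w)).card
      = (Finset.univ.filter (fun u : Equiv.Perm (Fin (2 * n + 1)) => InC n u)).card := by
  apply Finset.card_bij (fun w _ => FF n w)
  · intro w hw
    simp only [Finset.mem_filter, Finset.mem_univ, true_and] at hw ⊢
    exact FF_mem_C n hn w hw
  · intro w1 hw1 w2 hw2 h
    simp only [Finset.mem_filter, Finset.mem_univ, true_and] at hw1 hw2
    exact FF_inj n hn w1 w2 hw1 hw2 h
  · intro u hu
    simp only [Finset.mem_filter, Finset.mem_univ, true_and] at hu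
    obtain ⟨w, hw, hfw⟩ := FF_surj n hn u hu
    exact ⟨w, by simp [hw], hfw⟩

/-! ### Counting `C` -/

noncomputable def endExt (n : ℕ) (v : Equiv.Perm (Fin (2*n))) : Equiv.Perm (Fin (2*n+1)) :=
  finSuccEquivLast.trans ((Equiv.optionCongr v).trans finSuccEquivLast.symm)

noncomputable def frontExt (n : ℕ) (v : Equiv.Perm (Fin (2*n))) : Equiv.Perm (Fin (2*n+1)) :=
  (finSuccEquiv (2*n)).trans ((Equiv.optionCongr v).trans finSuccEquivLast.symm)

lemma endExt_castSucc (n : ℕ) (v : Equiv.Perm (Fin (2*n))) (i : Fin (2*n)) :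
    endExt n v i.castSucc = (v i).castSucc := by
  simp [endExt]

lemma endExt_last (n : ℕ) (v : Equiv.Perm (Fin (2*n))) :
    endExt n v (Fin.last (2*n)) = Fin.last (2*n) := by
  simp [endExt]

lemma frontExt_zero (n : ℕ) (v : Equiv.Perm (Fin (2*n))) :
    frontExt n v 0 = Fin.last (2*n) := by
  simp [frontExt]

lemma frontExt_succ (n : ℕ) (v : Equiv.Perm (Fin (2*n))) (i : Fin (2*n)) :
    frontExt n v i.succ = (v i).castSucc := by
  simp [frontExt]

lemma endExt_mk (n : ℕ) (v : Equiv.Perm (Fin (2*n))) (i : ℕ) (hi : i < 2*n)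
    (hi' : i < 2*n+1) :
    endExt n v ⟨i, hi'⟩ = (v ⟨i, hi⟩).castSucc := by
  have : (⟨i, hi'⟩ : Fin (2*n+1)) = (⟨i, hi⟩ : Fin (2*n)).castSucc := rfl
  rw [this, endExt_castSucc]

lemma frontExt_mk (n : ℕ) (v : Equiv.Perm (Fin (2*n))) (i : ℕ) (hi : i < 2*n)
    (hi' : i + 1 < 2*n+1) :
    frontExt n v ⟨i+1, hi'⟩ = (v ⟨i, hi⟩).castSucc := by
  have : (⟨i+1, hi'⟩ : Fin (2*n+1)) = (⟨i, hi⟩ : Fin (2*n)).succ := rfl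
  rw [this, frontExt_succ]

lemma descentsIn_endExt (n : ℕ) (v : Equiv.Perm (Fin (2*n))) :
    ∀ ℓ, ℓ ≤ 2*n - 1 → descentsIn (endExt n v) ℓ = descentsIn v ℓ := by
  intro ℓ
  induction ℓ with
  | zero => intro _; simp [descentsIn]
  | succ ℓ ih =>
      intro h
      rw [descentsIn_succ, descentsIn_succ, ih (by omega)]
      congr 1
      have h1 : ℓ + 1 < 2*n + 1 := by omega
      have h2 : ℓ + 1 < 2*n := by omega
      have hiff : (∃ hh : ℓ + 1 < 2*n+1,
          endExt n v ⟨ℓ + 1, hh⟩ < endExt n v ⟨ℓ, Nat.lt_of_succ_lt hh⟩) ↔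
          (∃ hh : ℓ + 1 < 2*n, v ⟨ℓ + 1, hh⟩ < v ⟨ℓ, Nat.lt_of_succ_lt hh⟩) := by
        constructor
        · rintro ⟨hh, hlt⟩
          refine ⟨h2, ?_⟩
          rw [endExt_mk n v (ℓ+1) h2 h1, endExt_mk n v ℓ (by omega) (by omega)] at hlt
          exact Fin.castSucc_lt_castSucc_iff.1 hlt
        · rintro ⟨hh, hlt⟩
          refine ⟨h1, ?_⟩
          rw [endExt_mk n v (ℓ+1) h2 h1, endExt_mk n v ℓ (by omega) (by omega)]
          exact Fin.castSucc_lt_castSucc_iff.2 hlt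
      simp only [hiff]

lemma descents_endExt (n : ℕ) (hn : 1 ≤ n) (v : Equiv.Perm (Fin (2*n))) :
    descents (endExt n v) = descents v := by
  rw [descents_eq_descentsIn]
  have hlen : descentsIn (endExt n v) (2*n) = descentsIn (endExt n v) (2*n-1+1) :=
    congrArg _ (by omega)
  rw [hlen, descentsIn_succ, descentsIn_endExt n v (2*n-1) le_rfl]
  have hzero : ¬(∃ hh : 2*n-1 + 1 < 2*n+1,
      endExt n v ⟨2*n-1 + 1, hh⟩ < endExt n v ⟨2*n-1, Nat.lt_of_succ_lt hh⟩) := by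
    rintro ⟨hh, hlt⟩
    have he : (⟨2*n-1+1, hh⟩ : Fin (2*n+1)) = Fin.last (2*n) := by
      ext
      simp only [Fin.val_last]
      omega
    rw [he, endExt_last] at hlt
    exact absurd hlt (not_lt.2 (Fin.le_last _))
  rw [if_neg hzero, add_zero]
  rfl

lemma descentsIn_frontExt (n : ℕ) (hn : 1 ≤ n) (v : Equiv.Perm (Fin (2*n))) :
    ∀ ℓ, ℓ ≤ 2*n - 1 → descentsIn (frontExt n v) (ℓ+1) = descentsIn v ℓ + 1 := by
  intro ℓ
  induction ℓ with
  | zero =>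
      intro _
      rw [descentsIn_succ]
      have h0 : descentsIn (frontExt n v) 0 = 0 := by simp [descentsIn]
      have h0' : descentsIn v 0 = 0 := by simp [descentsIn]
      rw [h0, h0']
      have hcond : (∃ hh : 0 + 1 < 2*n+1,
          frontExt n v ⟨0 + 1, hh⟩ < frontExt n v ⟨0, Nat.lt_of_succ_lt hh⟩) := by
        refine ⟨by omega, ?_⟩
        have e1 : frontExt n v ⟨0+1, by omega⟩ = (v ⟨0, by omega⟩).castSucc :=
          frontExt_mk n v 0 (by omega) (by omega)
        have e2 : (⟨0, by omega⟩ : Fin (2*n+1)) = 0 := rfl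
        rw [e1, e2, frontExt_zero]
        exact Fin.castSucc_lt_last _
      rw [if_pos hcond]
  | succ ℓ ih =>
      intro h
      rw [descentsIn_succ, ih (by omega), descentsIn_succ (w := v) (ℓ := ℓ)]
      have h1 : ℓ + 1 + 1 < 2*n + 1 := by omega
      have h2 : ℓ + 1 < 2*n := by omega
      have hiff : (∃ hh : ℓ + 1 + 1 < 2*n+1,
          frontExt n v ⟨ℓ + 1 + 1, hh⟩ < frontExt n v ⟨ℓ + 1, Nat.lt_of_succ_lt hh⟩) ↔
          (∃ hh : ℓ + 1 < 2*n, v ⟨ℓ + 1, hh⟩ < v ⟨ℓ, Nat.lt_of_succ_lt hh⟩) := by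
        constructor
        · rintro ⟨hh, hlt⟩
          refine ⟨h2, ?_⟩
          rw [frontExt_mk n v (ℓ+1) h2 h1, frontExt_mk n v ℓ (by omega) (by omega)] at hlt
          exact Fin.castSucc_lt_castSucc_iff.1 hlt
        · rintro ⟨hh, hlt⟩
          refine ⟨h1, ?_⟩
          rw [frontExt_mk n v (ℓ+1) h2 h1, frontExt_mk n v ℓ (by omega) (by omega)]
          exact Fin.castSucc_lt_castSucc_iff.2 hlt
      simp only [hiff]
      split <;> omega

lemma descents_frontExt (n : ℕ) (hn : 1 ≤ n) (v : Equiv.Perm (Fin (2*n))) :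
    descents (frontExt n v) = descents v + 1 := by
  rw [descents_eq_descentsIn]
  have hlen : descentsIn (frontExt n v) (2*n) = descentsIn (frontExt n v) (2*n-1+1) :=
    congrArg _ (by omega)
  rw [hlen, descentsIn_frontExt n hn v (2*n-1) le_rfl]
  rfl

lemma optionCongr_removeNone' {α : Type*} (e : Option α ≃ Option α) (he : e none = none) :
    Equiv.optionCongr (Equiv.removeNone e) = e := by
  ext x
  cases x with
  | none => simp [he]
  | some a =>
      have hne : e (some a) ≠ none := by
        intro hc
        exact Option.some_ne_none a (e.injective (hc.trans he.symm))
      obtain ⟨b, hb⟩ := Option.ne_none_iff_exists'.1 hne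
      have := Equiv.removeNone_some e ⟨b, hb⟩
      simp only [Equiv.optionCongr_apply, Option.map_some]
      rw [← this]

lemma frontExt_inj (n : ℕ) (v1 v2 : Equiv.Perm (Fin (2*n)))
    (h : frontExt n v1 = frontExt n v2) : v1 = v2 := by
  ext i
  have h1 : frontExt n v1 i.succ = frontExt n v2 i.succ := by rw [h]
  rw [frontExt_succ, frontExt_succ] at h1
  have := Fin.castSucc_injective _ h1
  rw [this]

lemma endExt_inj (n : ℕ) (v1 v2 : Equiv.Perm (Fin (2*n)))
    (h : endExt n v1 = endExt n v2) : v1 = v2 := by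
  ext i
  have h1 : endExt n v1 i.castSucc = endExt n v2 i.castSucc := by rw [h]
  rw [endExt_castSucc, endExt_castSucc] at h1
  have := Fin.castSucc_injective _ h1
  rw [this]

lemma frontExt_surj (n : ℕ) (u : Equiv.Perm (Fin (2*n+1))) (hu : u 0 = Fin.last (2*n)) :
    ∃ v, frontExt n v = u := by
  set e := ((finSuccEquiv (2*n)).symm.trans (u.trans finSuccEquivLast)) with hedef
  have he : e none = none := by
    rw [hedef]
    simp only [Equiv.trans_apply]
    rw [finSuccEquiv_symm_none, hu, finSuccEquivLast_last]
  refine ⟨Equiv.removeNone e, ?_⟩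
  unfold frontExt
  rw [optionCongr_removeNone' e he, hedef]
  ext x
  simp

lemma endExt_surj (n : ℕ) (u : Equiv.Perm (Fin (2*n+1)))
    (hu : u (Fin.last (2*n)) = Fin.last (2*n)) :
    ∃ v, endExt n v = u := by
  set e := (finSuccEquivLast.symm.trans (u.trans finSuccEquivLast)) with hedef
  have he : e none = none := by
    rw [hedef]
    simp only [Equiv.trans_apply]
    rw [finSuccEquivLast_symm_none, hu, finSuccEquivLast_last]
  refine ⟨Equiv.removeNone e, ?_⟩
  unfold endExt
  rw [optionCongr_removeNone' e he, hedef]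
  ext x
  simp

lemma card_C (n : ℕ) (hn : 1 ≤ n) :
    (Finset.univ.filter (fun u : Equiv.Perm (Fin (2 * n + 1)) => InC n u)).card
      = eulerian (n - 1) (2 * n) + eulerian n (2 * n) := by
  have hlast_ne : (0 : Fin (2*n+1)) ≠ Fin.last (2*n) := by
    intro hc
    have := congrArg Fin.val hc
    simp only [Fin.val_zero, Fin.val_last] at this
    omega
  have hsplit : (Finset.univ.filter (fun u : Equiv.Perm (Fin (2 * n + 1)) => InC n u))
      = (Finset.univ.filter (fun u : Equiv.Perm (Fin (2 * n + 1)) =>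
          descents u = n ∧ u 0 = Fin.last (2*n)))
        ∪ (Finset.univ.filter (fun u : Equiv.Perm (Fin (2 * n + 1)) =>
          descents u = n ∧ u (Fin.last (2*n)) = Fin.last (2*n))) := by
    ext u
    simp only [Finset.mem_filter, Finset.mem_union, Finset.mem_univ, true_and]
    simp only [InC]
    tauto
  have hdisj : Disjoint
      (Finset.univ.filter (fun u : Equiv.Perm (Fin (2 * n + 1)) =>
        descents u = n ∧ u 0 = Fin.last (2*n)))
      (Finset.univ.filter (fun u : Equiv.Perm (Fin (2 * n + 1)) =>
        descents u = n ∧ u (Fin.last (2*n)) = Fin.last (2*n))) := by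
    rw [Finset.disjoint_left]
    intro u h1 h2
    simp only [Finset.mem_filter, Finset.mem_univ, true_and] at h1 h2
    exact hlast_ne (u.injective (h1.2.trans h2.2.symm))
  rw [hsplit, Finset.card_union_of_disjoint hdisj]
  have hfront : (Finset.univ.filter (fun u : Equiv.Perm (Fin (2 * n + 1)) =>
      descents u = n ∧ u 0 = Fin.last (2*n))).card = eulerian (n - 1) (2 * n) := by
    rw [eulerian]
    symm
    apply Finset.card_bij (fun (v : Equiv.Perm (Fin (2*n))) _ => frontExt n v)
    · intro v hv
      simp only [Finset.mem_filter, Finset.mem_univ, true_and] at hv ⊢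
      refine ⟨?_, frontExt_zero n v⟩
      rw [descents_frontExt n hn v, hv]
      omega
    · intro v1 hv1 v2 hv2 h
      exact frontExt_inj n v1 v2 h
    · intro u hu
      simp only [Finset.mem_filter, Finset.mem_univ, true_and] at hu
      obtain ⟨v, hv⟩ := frontExt_surj n u hu.2
      refine ⟨v, ?_, hv⟩
      simp only [Finset.mem_filter, Finset.mem_univ, true_and]
      have := descents_frontExt n hn v
      rw [hv] at this
      omega
  have hback : (Finset.univ.filter (fun u : Equiv.Perm (Fin (2 * n + 1)) =>
      descents u = n ∧ u (Fin.last (2*n)) = Fin.last (2*n))).card = eulerian n (2 * n) := by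
    rw [eulerian]
    symm
    apply Finset.card_bij (fun (v : Equiv.Perm (Fin (2*n))) _ => endExt n v)
    · intro v hv
      simp only [Finset.mem_filter, Finset.mem_univ, true_and] at hv ⊢
      refine ⟨?_, endExt_last n v⟩
      rw [descents_endExt n hn v, hv]
    · intro v1 hv1 v2 hv2 h
      exact endExt_inj n v1 v2 h
    · intro u hu
      simp only [Finset.mem_filter, Finset.mem_univ, true_and] at hu
      obtain ⟨v, hv⟩ := endExt_surj n u hu.2
      refine ⟨v, ?_, hv⟩
      simp only [Finset.mem_filter, Finset.mem_univ, true_and]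
      have := descents_endExt n hn v
      rw [hv] at this
      omega
  rw [hfront, hback]

end DyckProof

/-- The number of Dyck permutations in `S_{2n+1}` equals `A(n-1,2n) + A(n,2n)`. -/
theorem card_dyckPerm_eq_sum_eulerian (n : ℕ) (hn : 1 ≤ n) :
    (Finset.univ.filter (fun w : Equiv.Perm (Fin (2 * n + 1)) => IsDyckPerm n w)).card
      = eulerian (n - 1) (2 * n) + eulerian n (2 * n) := by
  rw [DyckProof.card_B_eq_card_C n hn, DyckProof.card_C n hn]
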